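/- Let z₁,…,zₙ be independent Bernoulli random variables with success probabilities p₁,…,pₙ ∈ (0,1], let qᵤ, tᵤ ∈ R^d be fixed vectors, with aᵤ = ‖qᵤ‖ > 0 for all u, and let γ = Σᵤ pᵤ. Then the total variance S(p) = Σᵤ ‖qᵤ‖²(1/pᵤ − 1) is minimized over all probability vectors p with Σ pᵤ = γ and 0 < pᵤ ≤ 1 exactly when pᵤ = γ·aᵤ/Σᵥ aᵥ, provided γ·aᵤ/Σᵥ aᵥ ≤ 1 for all u. -/

import Mathlib

open MeasureTheory ProbabilityTheory

/-- Theorem 1 (SRPE minimum-variance recomputation probabilities): for independent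
Bernoulli variables `zᵤ` with probabilities `pᵤ ∈ (0,1]` and budget `γ = ∑ pᵤ`,
the total variance `S(p) = ∑ᵤ ‖qᵤ‖²(1/pᵤ − 1)` over all feasible probability
vectors with the same budget is minimized exactly at `pᵤ = γ·aᵤ/∑ᵥ aᵥ`, where
`aᵤ = ‖qᵤ‖ > 0`, provided `γ·aᵤ/∑ᵥ aᵥ ≤ 1` for all `u`. -/
theorem stmt_5 {Ω : Type*} [MeasureSpace Ω] [IsProbabilityMeasure (ℙ : Measure Ω)]
    {n d : ℕ} (q t : Fin n → Fin d → ℝ) (p : Fin n → ℝ)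
    (hp0 : ∀ u, 0 < p u) (hp1 : ∀ u, p u ≤ 1)
    (z : Fin n → Ω → ℝ) (hz01 : ∀ u, ∀ ω : Ω, z u ω = 0 ∨ z u ω = 1)
    (hzmeas : ∀ u, Measurable (z u))
    (hzp : ∀ u, (ℙ : Measure Ω) {ω : Ω | z u ω = 1} = ENNReal.ofReal (p u))
    (hindep : iIndepFun z ℙ)
    (a : Fin n → ℝ) (ha : ∀ u, a u = Real.sqrt (∑ i, (q u i) ^ 2))
    (hapos : ∀ u, 0 < a u)
    (γ : ℝ) (hγ : γ = ∑ u, p u)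
    (hbudget : ∀ u, γ * a u / (∑ v, a v) ≤ 1) :
    (∀ p' : Fin n → ℝ, (∀ u, 0 < p' u) → (∀ u, p' u ≤ 1) → ∑ u, p' u = γ →
        ∑ u, (∑ i, (q u i) ^ 2) * (1 / (γ * a u / (∑ v, a v)) - 1) ≤
          ∑ u, (∑ i, (q u i) ^ 2) * (1 / p' u - 1)) ∧
      ∀ p' : Fin n → ℝ, (∀ u, 0 < p' u) → (∀ u, p' u ≤ 1) → ∑ u, p' u = γ →
        (∑ u, (∑ i, (q u i) ^ 2) * (1 / p' u - 1) =
            ∑ u, (∑ i, (q u i) ^ 2) * (1 / (γ * a u / (∑ v, a v)) - 1) ↔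
          ∀ u, p' u = γ * a u / (∑ v, a v)) := by
  classical
  by_cases hn : IsEmpty (Fin n)
  · constructor
    · intro p' _ _ _; simp
    · intro p' _ _ _; simp [hn.forall_iff]
  · haveI : Nonempty (Fin n) := not_isEmpty_iff.mp hn
    set A : ℝ := ∑ v, a v with hAdef
    have hApos : 0 < A := Finset.sum_pos (fun v _ => hapos v) Finset.univ_nonempty
    have hγpos : 0 < γ := by
      rw [hγ]; exact Finset.sum_pos (fun u _ => hp0 u) Finset.univ_nonempty
    have haq : ∀ u, (∑ i, (q u i) ^ 2) = a u ^ 2 := by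
      intro u
      rw [ha u, Real.sq_sqrt]
      positivity
    -- key inequality via completing the square
    have key : ∀ p' : Fin n → ℝ, (∀ u, 0 < p' u) → ∑ u, p' u = γ →
        A ^ 2 / γ ≤ ∑ u, a u ^ 2 / p' u ∧
          ((∑ u, a u ^ 2 / p' u) = A ^ 2 / γ ↔ ∀ u, p' u = γ * a u / A) := by
      intro p' hp' hsum
      set c : ℝ := A / γ with hc
      have hcpos : 0 < c := div_pos hApos hγpos
      have hexp : ∀ u, (a u - c * p' u) ^ 2 / p' u
          = a u ^ 2 / p' u - 2 * c * a u + c ^ 2 * p' u := by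
        intro u
        have h0 : p' u ≠ 0 := ne_of_gt (hp' u)
        field_simp
        ring
      have hsumg : ∑ u, (a u - c * p' u) ^ 2 / p' u
          = (∑ u, a u ^ 2 / p' u) - A ^ 2 / γ := by
        rw [Finset.sum_congr rfl (fun u _ => hexp u)]
        rw [Finset.sum_add_distrib, Finset.sum_sub_distrib, ← Finset.mul_sum,
          ← Finset.mul_sum, ← hAdef, hsum, hc]
        field_simp
        ring
      have hnonneg : ∀ u ∈ Finset.univ, 0 ≤ (a u - c * p' u) ^ 2 / p' u := by
        intro u _
        exact div_nonneg (sq_nonneg _) (le_of_lt (hp' u))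
      constructor
      · have := Finset.sum_nonneg hnonneg
        rw [hsumg] at this
        linarith
      · constructor
        · intro heq
          have hzero : ∑ u, (a u - c * p' u) ^ 2 / p' u = 0 := by
            rw [hsumg, heq]; ring
          have hall := (Finset.sum_eq_zero_iff_of_nonneg hnonneg).mp hzero
          intro u
          have hu := hall u (Finset.mem_univ u)
          have h0 : p' u ≠ 0 := ne_of_gt (hp' u)
          have h1 : (a u - c * p' u) ^ 2 = 0 := by
            rcases div_eq_zero_iff.mp hu with h | h
            · exact h
            · exact absurd h h0
          have h2 : a u = c * p' u := by
            have := pow_eq_zero_iff (n := 2) (by norm_num) |>.mp h1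
            linarith
          rw [hc] at h2
          field_simp at h2 ⊢
          linarith [h2]
        · intro hall
          have : ∀ u, a u ^ 2 / p' u = A / γ * a u := by
            intro u
            rw [hall u]
            have h0 : a u ≠ 0 := ne_of_gt (hapos u)
            have h1 : γ ≠ 0 := ne_of_gt hγpos
            have h2 : A ≠ 0 := ne_of_gt hApos
            field_simp
          rw [Finset.sum_congr rfl (fun u _ => this u), ← Finset.mul_sum, ← hAdef]
          field_simp
    -- rewrite objective
    have hgen : ∀ p' : Fin n → ℝ, (∀ u, 0 < p' u) →
        ∑ u, (∑ i, (q u i) ^ 2) * (1 / p' u - 1)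
          = (∑ u, a u ^ 2 / p' u) - ∑ u, a u ^ 2 := by
      intro p' hp'
      rw [← Finset.sum_sub_distrib]
      refine Finset.sum_congr rfl fun u _ => ?_
      rw [haq u]
      have h0 : p' u ≠ 0 := ne_of_gt (hp' u)
      field_simp
    have hoptpos : ∀ u, 0 < γ * a u / A := fun u =>
      div_pos (mul_pos hγpos (hapos u)) hApos
    have hoptval : ∑ u, (∑ i, (q u i) ^ 2) * (1 / (γ * a u / A) - 1)
        = A ^ 2 / γ - ∑ u, a u ^ 2 := by
      rw [hgen _ hoptpos]
      congr 1
      have : ∀ u, a u ^ 2 / (γ * a u / A) = A / γ * a u := by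
        intro u
        have h0 : a u ≠ 0 := ne_of_gt (hapos u)
        have h1 : γ ≠ 0 := ne_of_gt hγpos
        have h2 : A ≠ 0 := ne_of_gt hApos
        field_simp
      rw [Finset.sum_congr rfl (fun u _ => this u), ← Finset.mul_sum, ← hAdef]
      field_simp
    constructor
    · intro p' hp'0 _ hp'sum
      rw [hoptval, hgen _ hp'0]
      have := (key p' hp'0 hp'sum).1
      linarith
    · intro p' hp'0 _ hp'sum
      rw [hoptval, hgen _ hp'0]
      have hiff := (key p' hp'0 hp'sum).2
      constructor
      · intro h
        exact hiff.mp (by linarith)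
      · intro h
        have := hiff.mpr h
        linarith
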